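/- arXiv:gr-qc/0406120 — 2 statements merged into one kernel-verified Lean document; each statement's English description precedes it below -/
import Mathlib

section
/- Let Ṽ, Ω̃ : ℝ → ℝ be differentiable with Ṽ' = (2 − S̃)Ṽ and Ω̃' = 2[(q−2) + (2−S̃)Ṽ²/(1+Ṽ²)]Ω̃ where q(τ) ≤ 2, Ṽ(τ) ∈ [0,1), Ω̃(τ) ∈ (0,1], and S̃ continuous and bounded. Fix τ₀. Then there exists δ > 0 such that Ω̃(τ) ≥ δ for all τ ≤ τ₀, and ∫_{τ}^{τ₀} (2 − q(t)) dt is bounded uniformly in τ ≤ τ₀. -/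
theorem stmt_8 (Vt Ωt q St : ℝ → ℝ)
    (hVt : Differentiable ℝ Vt) (hΩt : Differentiable ℝ Ωt)
    (hq : Continuous q) (hSt : Continuous St) (hqle : ∀ τ, q τ ≤ 2)
    (C : ℝ) (hStbd : ∀ τ, |St τ| ≤ C)
    (hVrange : ∀ τ, 0 ≤ Vt τ ∧ Vt τ < 1)
    (hΩrange : ∀ τ, 0 < Ωt τ ∧ Ωt τ ≤ 1)
    (hVode : ∀ τ, deriv Vt τ = (2 - St τ) * Vt τ)
    (hΩode : ∀ τ, deriv Ωt τ =
      2 * ((q τ - 2) + (2 - St τ) * (Vt τ)^2 / (1 + (Vt τ)^2)) * Ωt τ)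
    (τ₀ : ℝ) :
    (∃ δ > 0, ∀ τ ≤ τ₀, δ ≤ Ωt τ) ∧
      (∃ M : ℝ, ∀ τ ≤ τ₀, ∫ t in τ..τ₀, (2 - q t) ≤ M) := by
  set F : ℝ → ℝ := fun t => Real.log (Ωt t) - Real.log (1 + (Vt t)^2) with hFdef
  clear_value F
  have hden : ∀ τ, (0:ℝ) < 1 + (Vt τ)^2 := fun τ => by positivity
  have hF : ∀ τ, HasDerivAt F (2 * (q τ - 2)) τ := by
    intro τ
    have hΩpos := (hΩrange τ).1
    have h1 : HasDerivAt (fun t => Real.log (Ωt t)) ((Ωt τ)⁻¹ * deriv Ωt τ) τ :=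
      (Real.hasDerivAt_log hΩpos.ne').comp τ (hΩt τ).hasDerivAt
    have hV2 : HasDerivAt (fun t => 1 + (Vt t)^2)
        ((2 : ℕ) * (Vt τ)^(1 : ℕ) * deriv Vt τ) τ :=
      (((hVt τ).hasDerivAt).pow 2).const_add 1
    have h2 : HasDerivAt (fun t => Real.log (1 + (Vt t)^2))
        ((1 + (Vt τ)^2)⁻¹ * ((2 : ℕ) * (Vt τ)^(1 : ℕ) * deriv Vt τ)) τ :=
      by have := (Real.hasDerivAt_log (hden τ).ne').comp τ hV2; exact this
    have h := h1.sub h2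
    rw [hFdef]
    refine h.congr_deriv ?_
    rw [hΩode τ, hVode τ]
    field_simp
    ring
  have hint : ∀ τ, F τ₀ - F τ = ∫ t in τ..τ₀, 2 * (q t - 2) := by
    intro τ
    exact (intervalIntegral.integral_eq_sub_of_hasDerivAt
      (fun x _ => hF x)
      (((continuous_const.mul ((hq.sub continuous_const))).intervalIntegrable τ τ₀))).symm
  have hI : ∀ τ, (∫ t in τ..τ₀, (2 - q t)) = (F τ - F τ₀) / 2 := by
    intro τ
    have : (∫ t in τ..τ₀, (2 - q t)) = ∫ t in τ..τ₀, (-(1/2 : ℝ)) * (2 * (q t - 2)) := by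
      congr 1; funext t; ring
    rw [this, intervalIntegral.integral_const_mul, ← hint τ]
    ring
  have hFle : ∀ τ, F τ ≤ 0 := by
    intro τ
    have h1 : Real.log (Ωt τ) ≤ 0 := Real.log_nonpos (hΩrange τ).1.le (hΩrange τ).2
    have h2 : 0 ≤ Real.log (1 + (Vt τ)^2) := Real.log_nonneg (by nlinarith [sq_nonneg (Vt τ)])
    simp only [hFdef]; linarith
  constructor
  · refine ⟨Real.exp (F τ₀), Real.exp_pos _, fun τ hτ => ?_⟩
    have hnn : 0 ≤ ∫ t in τ..τ₀, (2 - q t) :=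
      intervalIntegral.integral_nonneg hτ (fun x _ => by linarith [hqle x])
    have hFge : F τ₀ ≤ F τ := by
      have := hI τ; linarith
    have h2 : 0 ≤ Real.log (1 + (Vt τ)^2) := Real.log_nonneg (by nlinarith [sq_nonneg (Vt τ)])
    have hlog : F τ₀ ≤ Real.log (Ωt τ) := by
      simp only [hFdef] at hFge ⊢; linarith
    calc Real.exp (F τ₀) ≤ Real.exp (Real.log (Ωt τ)) := Real.exp_le_exp.mpr hlog
      _ = Ωt τ := Real.exp_log (hΩrange τ).1
  · refine ⟨(0 - F τ₀) / 2, fun τ hτ => ?_⟩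
    rw [hI τ]
    have := hFle τ
    linarith
end

section
/- Let V : ℝ → [0,1) satisfy V' = [V(1−V²)/(1−(γ−1)V²)]·[(3γ−4) − S], where 1 < γ < 2 and S(τ) is continuous with |S(τ)| ≤ s₀ < 3γ−4 for all τ ≥ τ₁ (assuming γ > 4/3 so that 3γ−4 > 0). If 0 < V(τ₁) < 1, then V(τ) → 1 as τ → +∞. -/
open Filter

theorem stmt_15 (γ s₀ τ₁ : ℝ) (hγ : 1 < γ ∧ γ < 2) (hγ' : 4/3 < γ)
    (V S : ℝ → ℝ) (hV : Differentiable ℝ V)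
    (hVrange : ∀ τ, 0 ≤ V τ ∧ V τ < 1)
    (hS : Continuous S) (hs₀ : 0 ≤ s₀) (hs₀' : s₀ < 3*γ - 4)
    (hSbd : ∀ τ ≥ τ₁, |S τ| ≤ s₀)
    (hode : ∀ τ, deriv V τ =
      V τ * (1 - (V τ)^2) / (1 - (γ - 1) * (V τ)^2) * ((3*γ - 4) - S τ))
    (hinit : 0 < V τ₁) :
    Tendsto V atTop (nhds 1) := by
  obtain ⟨hγ1, hγ2⟩ := hγ
  set c : ℝ := 3*γ - 4 - s₀ with hc
  have hcpos : 0 < c := by simp [hc]; linarith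
  -- denominator bounds
  have hden : ∀ τ, 0 < 1 - (γ - 1) * (V τ)^2 ∧ 1 - (γ - 1) * (V τ)^2 ≤ 1 := by
    intro τ
    obtain ⟨h0, h1⟩ := hVrange τ
    have hsq : (V τ)^2 < 1 := by nlinarith
    have hsq0 : 0 ≤ (V τ)^2 := sq_nonneg _
    constructor <;> nlinarith
  have hnum : ∀ τ, 0 ≤ V τ * (1 - (V τ)^2) := by
    intro τ
    obtain ⟨h0, h1⟩ := hVrange τ
    have : (V τ)^2 < 1 := by nlinarith
    nlinarith
  -- key lower bound on deriv for τ ≥ τ₁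
  have key : ∀ τ, τ₁ ≤ τ → c * (V τ * (1 - (V τ)^2)) ≤ deriv V τ := by
    intro τ hτ
    rw [hode τ]
    have hB : c ≤ 3*γ - 4 - S τ := by
      have := (abs_le.mp (hSbd τ hτ)).2
      simp [hc]; linarith
    obtain ⟨hd0, hd1⟩ := hden τ
    have hN := hnum τ
    have hA : V τ * (1 - (V τ)^2) ≤ V τ * (1 - (V τ)^2) / (1 - (γ - 1) * (V τ)^2) := by
      rw [le_div_iff₀ hd0]
      nlinarith
    have hA0 : 0 ≤ V τ * (1 - (V τ)^2) / (1 - (γ - 1) * (V τ)^2) := div_nonneg hN hd0.le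
    calc c * (V τ * (1 - (V τ)^2)) ≤ (V τ * (1 - (V τ)^2) / (1 - (γ - 1) * (V τ)^2)) * (3*γ - 4 - S τ) := by
          rw [mul_comm]
          exact mul_le_mul hA hB hcpos.le hA0
      _ = V τ * (1 - (V τ)^2) / (1 - (γ - 1) * (V τ)^2) * ((3*γ - 4) - S τ) := by ring
  have hderiv_nonneg : ∀ τ, τ₁ ≤ τ → 0 ≤ deriv V τ := by
    intro τ hτ
    exact le_trans (mul_nonneg hcpos.le (hnum τ)) (key τ hτ)
  -- V monotone on Ici τ₁
  have hmono : MonotoneOn V (Set.Ici τ₁) := by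
    apply monotoneOn_of_deriv_nonneg (convex_Ici τ₁) hV.continuous.continuousOn
      (hV.differentiableOn)
    intro x hx
    rw [interior_Ici] at hx
    exact hderiv_nonneg x (le_of_lt hx)
  -- W = V ∘ max · τ₁
  set W : ℝ → ℝ := fun t => V (max t τ₁) with hW
  have hWmono : Monotone W := by
    intro a b hab
    exact hmono (Set.mem_Ici.mpr (le_max_right a τ₁)) (Set.mem_Ici.mpr (le_max_right b τ₁))
      (max_le_max hab le_rfl)
  have hWbdd : BddAbove (Set.range W) := by
    refine ⟨1, ?_⟩
    rintro x ⟨t, rfl⟩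
    exact (hVrange _).2.le
  set L : ℝ := ⨆ t, W t with hL
  have hWtend : Tendsto W atTop (nhds L) := tendsto_atTop_ciSup hWmono hWbdd
  have hLle : ∀ t, W t ≤ L := fun t => le_ciSup hWbdd t
  have hL1 : L ≤ 1 := ciSup_le fun t => (hVrange _).2.le
  have hLge : V τ₁ ≤ L := by
    have := hLle τ₁
    simpa [hW] using this
  have hLpos : 0 < L := lt_of_lt_of_le hinit hLge
  -- claim L = 1
  have hLeq : L = 1 := by
    by_contra hne
    have hLlt : L < 1 := lt_of_le_of_ne hL1 hne
    set δ : ℝ := c * (V τ₁ * (1 - L^2)) with hδ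
    have hδpos : 0 < δ := by
      apply mul_pos hcpos
      apply mul_pos hinit
      nlinarith
    -- deriv V τ ≥ δ for τ ≥ τ₁
    have hdd : ∀ τ, τ₁ ≤ τ → δ ≤ deriv V τ := by
      intro τ hτ
      refine le_trans ?_ (key τ hτ)
      have hVle : V τ ≤ L := by
        have := hLle τ
        simpa [hW, max_eq_left hτ] using this
      have hVge : V τ₁ ≤ V τ := hmono (Set.mem_Ici.mpr le_rfl) (Set.mem_Ici.mpr hτ) hτ
      have h0 : 0 ≤ V τ := (hVrange τ).1
      have hsq : (V τ)^2 ≤ L^2 := by nlinarith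
      have h1L : (0:ℝ) ≤ 1 - L^2 := by nlinarith
      have h2L : 1 - L^2 ≤ 1 - (V τ)^2 := by nlinarith
      have : V τ₁ * (1 - L^2) ≤ V τ * (1 - (V τ)^2) :=
        mul_le_mul hVge h2L h1L h0
      rw [hδ]
      exact mul_le_mul_of_nonneg_left this hcpos.le
    -- f t = V t - δ t monotone on Ici τ₁
    have hder : ∀ x : ℝ, HasDerivAt (fun t => V t - δ * t) (deriv V x - δ) x := by
      intro x
      have h1 : HasDerivAt (fun t : ℝ => δ * t) δ x := by
        simpa using (hasDerivAt_id x).const_mul δ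
      exact ((hV x).hasDerivAt).sub h1
    have hfmono : MonotoneOn (fun t => V t - δ * t) (Set.Ici τ₁) := by
      apply monotoneOn_of_deriv_nonneg (convex_Ici τ₁)
        ((hV.continuous.sub (continuous_const.mul continuous_id')).continuousOn)
        (fun x _ => ((hder x).differentiableAt).differentiableWithinAt)
      intro x hx
      rw [interior_Ici] at hx
      show 0 ≤ deriv (fun t => V t - δ * t) x
      rw [(hder x).deriv]
      linarith [hdd x hx.le]
    have hτ2 : τ₁ ≤ τ₁ + 1/δ := by
      have := one_div_pos.mpr hδpos
      linarith
    have := hfmono (Set.mem_Ici.mpr le_rfl) (Set.mem_Ici.mpr hτ2) hτ2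
    simp only at this
    have hcalc : δ * (τ₁ + 1/δ) = δ * τ₁ + 1 := by
      rw [mul_add, mul_one_div_cancel hδpos.ne']
    have h1 : V τ₁ + 1 ≤ V (τ₁ + 1/δ) := by linarith
    have := (hVrange (τ₁ + 1/δ)).2
    linarith
  -- conclude
  have hWtend1 : Tendsto W atTop (nhds 1) := hLeq ▸ hWtend
  refine Tendsto.congr' ?_ hWtend1
  filter_upwards [eventually_ge_atTop τ₁] with t ht
  simp [hW, max_eq_left ht]
end
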